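/- For every ε with 0 < ε < 1/2, the proportion of eigenvalues of R_N lying in the middle range [ε, 1−ε] tends to zero, i.e. lim_{N→∞} #{ j : ε ≤ λ_j(N) ≤ 1−ε }/N = 0; consequently, asymptotically a fraction m(J)/(2π) of the eigenvalues are within ε of 1 and the remaining fraction 1 − m(J)/(2π) are within ε of 0 (so the numerical rank of R_N is asymptotic to N·m(J)/(2π)). -/

import Mathlib

open MeasureTheory Filter Topology Matrix

/-- Fourier coefficients of the indicator of the band `J`:
`ρ(t) = (1/(2π)) ∫_J e^{itω} dω`. -/
noncomputable def rho (J : Set ℝ) (t : ℤ) : ℂ :=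
  (1 / (2 * Real.pi)) * ∫ ω in J, Complex.exp (Complex.I * (t : ℂ) * (ω : ℂ))

/-- The `N × N` Toeplitz matrix with `(j,k)` entry `ρ(j - k)`. -/
noncomputable def Rmat (J : Set ℝ) (N : ℕ) : Matrix (Fin N) (Fin N) ℂ :=
  Matrix.of fun j k => rho J ((j : ℤ) - (k : ℤ))

lemma coe_inv_two_pi : (((1 : ℝ) / (2 * Real.pi) : ℝ) : ℂ) = 1 / (2 * Real.pi) := by
  push_cast; ring

lemma rho_zero (J : Set ℝ) : rho J 0 = ((volume J).toReal / (2 * Real.pi) : ℝ) := by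
  simp only [rho, Int.cast_zero, mul_zero, zero_mul, Complex.exp_zero]
  rw [setIntegral_const]
  norm_num
  push_cast
  simp only [measureReal_def]
  ring

lemma rho_neg (J : Set ℝ) (t : ℤ) : rho J (-t) = starRingEnd ℂ (rho J t) := by
  have h1 : ∀ ω : ℝ, Complex.exp (Complex.I * ((-t : ℤ) : ℂ) * (ω : ℂ))
      = starRingEnd ℂ (Complex.exp (Complex.I * (t : ℂ) * (ω : ℂ))) := by
    intro ω
    rw [← Complex.exp_conj]
    congr 1
    simp only [_root_.map_mul, Complex.conj_I, Complex.conj_ofReal, map_intCast]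
    push_cast
    ring
  rw [rho, rho, ← coe_inv_two_pi]
  simp only [h1, integral_conj, _root_.map_mul, Complex.conj_ofReal]

lemma rho_hasSum (J : Set ℝ) (hJmeas : MeasurableSet J)
    (hJsub : J ⊆ Set.Icc (-Real.pi) Real.pi) :
    HasSum (fun t : ℤ => ‖rho J t‖ ^ 2) ((volume J).toReal / (2 * Real.pi)) := by
  have hπ : 0 < Real.pi := Real.pi_pos
  haveI : Fact (0 < 2 * Real.pi) := ⟨by positivity⟩
  set g : ℝ → ℂ := J.indicator 1 with hg
  set f : AddCircle (2 * Real.pi) → ℂ := AddCircle.liftIoc (2 * Real.pi) (-Real.pi) g with hf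
  have hmg : Measurable g := measurable_const.indicator hJmeas
  have hmf : Measurable f := by
    have : f = (g ∘ Subtype.val) ∘
        (AddCircle.measurableEquivIoc (2 * Real.pi) (-Real.pi)) := rfl
    rw [this]
    exact (hmg.comp measurable_subtype_coe).comp
      (AddCircle.measurableEquivIoc _ _).measurable
  have hbg : ∀ y, ‖g y‖ ≤ 1 := by
    intro y
    by_cases h : y ∈ J <;> simp [hg, Set.indicator_of_mem, Set.indicator_of_notMem, h]
  have hbf : ∀ x, ‖f x‖ ≤ 1 := fun x => hbg _
  have hmemLp : MemLp f 2 (AddCircle.haarAddCircle) :=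
    MemLp.of_bound hmf.aestronglyMeasurable 1 (Eventually.of_forall hbf)
  set F := hmemLp.toLp f with hF
  have hcoeff : ∀ n : ℤ, fourierCoeff (F : AddCircle (2 * Real.pi) → ℂ) n = fourierCoeff f n := by
    intro n
    unfold fourierCoeff
    apply integral_congr_ae
    filter_upwards [hmemLp.coeFn_toLp] with x hx
    rw [hx]
  have hae : (Set.Ioc (-Real.pi) Real.pi ∩ J : Set ℝ) =ᵐ[volume] J := by
    rw [MeasureTheory.ae_eq_set]
    constructor
    · apply measure_mono_null (t := (∅ : Set ℝ)) _ measure_empty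
      intro x hx
      exact hx.2 hx.1.2
    · apply measure_mono_null (t := {-Real.pi}) _ (measure_singleton _)
      intro x hx
      have h1 := hJsub hx.1
      have h2 : x ∉ Set.Ioc (-Real.pi) Real.pi := fun h => hx.2 ⟨h, hx.1⟩
      simp only [Set.mem_Ioc, not_and_or, not_lt, not_le] at h2
      rcases h2 with h2 | h2
      · simp only [Set.mem_singleton_iff]
        linarith [h1.1]
      · exfalso; linarith [h1.2]
  have hcoe : ∀ n : ℤ, fourierCoeff f n = rho J (-n) := by
    intro n
    rw [fourierCoeff_eq_intervalIntegral f n (-Real.pi)]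
    have hint : -Real.pi + 2 * Real.pi = Real.pi := by ring
    rw [hint, intervalIntegral.integral_of_le (by linarith)]
    have hfun : ∀ x ∈ Set.Ioc (-Real.pi) Real.pi,
        (fourier (-n) (x : AddCircle (2 * Real.pi))) • f ↑x
          = J.indicator (fun ω : ℝ => Complex.exp (Complex.I * ((-n : ℤ) : ℂ) * (ω : ℂ))) x := by
      intro x hx
      have hfx : f ↑x = g x := AddCircle.liftIoc_coe_apply (by rw [hint]; exact hx)
      rw [hfx, fourier_coe_apply]
      by_cases h : x ∈ J
      · simp only [hg, Set.indicator_of_mem h, Pi.one_apply, smul_eq_mul, mul_one]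
        congr 1
        have hπc : (Real.pi : ℂ) ≠ 0 := Complex.ofReal_ne_zero.2 hπ.ne'
        push_cast
        field_simp
      · simp [hg, Set.indicator_of_notMem h]
    rw [setIntegral_congr_fun measurableSet_Ioc hfun, setIntegral_indicator hJmeas,
      setIntegral_congr_set hae, rho, ← coe_inv_two_pi, ← Complex.real_smul]
  have hsummable : Summable
      (fun n : ℤ => ‖fourierCoeff (F : AddCircle (2 * Real.pi) → ℂ) n‖ ^ 2) := by
    have hmem := lp.memℓp (fourierBasis.repr F)
    rw [memℓp_gen_iff (by norm_num : (0:ℝ) < (2 : ENNReal).toReal)] at hmem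
    have heq : ∀ i : ℤ, ‖(fourierBasis.repr F) i‖ ^ (2 : ENNReal).toReal
        = ‖fourierCoeff (F : AddCircle (2 * Real.pi) → ℂ) i‖ ^ 2 := by
      intro i
      rw [fourierBasis_repr]
      rw [show ((2 : ENNReal).toReal) = ((2:ℕ):ℝ) by norm_num, Real.rpow_natCast]
    exact (summable_congr heq).1 hmem
  have htsum := tsum_sq_fourierCoeff F
  have hI : (∫ t : AddCircle (2 * Real.pi),
      ‖(F : AddCircle (2 * Real.pi) → ℂ) t‖ ^ 2 ∂AddCircle.haarAddCircle)
      = (volume J).toReal / (2 * Real.pi) := by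
    have h1 : (∫ t, ‖(F : AddCircle (2 * Real.pi) → ℂ) t‖ ^ 2 ∂AddCircle.haarAddCircle)
        = ∫ t, ‖f t‖ ^ 2 ∂AddCircle.haarAddCircle := by
      apply integral_congr_ae
      filter_upwards [hmemLp.coeFn_toLp] with x hx
      rw [hx]
    have h3 : (∫ t : AddCircle (2 * Real.pi), ‖f t‖ ^ 2) = (volume J).toReal := by
      have hint' : -Real.pi + 2 * Real.pi = Real.pi := by ring
      rw [← AddCircle.intervalIntegral_preimage (2 * Real.pi) (-Real.pi)
        (fun t => ‖f t‖ ^ 2), hint', intervalIntegral.integral_of_le (by linarith)]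
      have hfun2 : ∀ x ∈ Set.Ioc (-Real.pi) Real.pi,
          ‖f ↑x‖ ^ 2 = J.indicator (fun _ => (1:ℝ)) x := by
        intro x hx
        have hfx : f ↑x = g x := AddCircle.liftIoc_coe_apply (by rw [hint']; exact hx)
        rw [hfx]
        by_cases h : x ∈ J
        · simp [hg, Set.indicator_of_mem h]
        · simp [hg, Set.indicator_of_notMem h]
      rw [setIntegral_congr_fun measurableSet_Ioc hfun2, setIntegral_indicator hJmeas,
        setIntegral_congr_set hae, setIntegral_const, smul_eq_mul, mul_one, measureReal_def]
    have h2 : (∫ t : AddCircle (2 * Real.pi), ‖f t‖ ^ 2)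
        = 2 * Real.pi * ∫ t, ‖f t‖ ^ 2 ∂AddCircle.haarAddCircle := by
      rw [AddCircle.volume_eq_smul_haarAddCircle, integral_smul_measure,
        ENNReal.toReal_ofReal (by positivity), smul_eq_mul]
    rw [h1]
    have h4 : 2 * Real.pi * (∫ t, ‖f t‖ ^ 2 ∂AddCircle.haarAddCircle) = (volume J).toReal := by
      rw [← h2, h3]
    rw [eq_div_iff (by positivity : (2 * Real.pi) ≠ 0)]
    linarith [h4]
  have hFS : HasSum (fun n : ℤ => ‖fourierCoeff (F : AddCircle (2 * Real.pi) → ℂ) n‖ ^ 2)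
      ((volume J).toReal / (2 * Real.pi)) := by
    have h := hsummable.hasSum
    rwa [htsum, hI] at h
  have hcomp := ((Equiv.neg ℤ).hasSum_iff).2 hFS
  convert hcomp using 1
  funext t
  simp only [Function.comp_apply, Equiv.neg_apply, hcoeff, hcoe, neg_neg]

lemma trace_eq_sum_eigen {n : Type*} [Fintype n] [DecidableEq n] (A : Matrix n n ℂ)
    (hA : A.IsHermitian) : A.trace = ∑ i, (hA.eigenvalues i : ℂ) := by
  conv_lhs => rw [hA.spectral_theorem, Unitary.conjStarAlgAut_apply]
  rw [Matrix.trace_mul_cycle]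
  have h1 : (star (hA.eigenvectorUnitary : Matrix n n ℂ))
      * (hA.eigenvectorUnitary : Matrix n n ℂ) = 1 :=
    Matrix.mem_unitaryGroup_iff'.mp (hA.eigenvectorUnitary).2
  rw [h1, Matrix.one_mul, Matrix.trace_diagonal]
  rfl

lemma trace_sq_eq_sum_eigen_sq {n : Type*} [Fintype n] [DecidableEq n] (A : Matrix n n ℂ)
    (hA : A.IsHermitian) : (A * A).trace = ∑ i, ((hA.eigenvalues i : ℂ)) ^ 2 := by
  set U := (hA.eigenvectorUnitary : Matrix n n ℂ) with hU
  set D := Matrix.diagonal ((RCLike.ofReal : ℝ → ℂ) ∘ hA.eigenvalues) with hD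
  have h1 : star U * U = 1 := Matrix.mem_unitaryGroup_iff'.mp (hA.eigenvectorUnitary).2
  have hsp : A = U * D * star U := hA.spectral_theorem
  have hAA : A * A = U * (D * (D * star U)) := by
    rw [hsp]
    simp only [Matrix.mul_assoc]
    rw [← Matrix.mul_assoc (star U) U (D * star U), h1, Matrix.one_mul]
  rw [hAA, Matrix.trace_mul_comm U (D * (D * star U))]
  simp only [Matrix.mul_assoc]
  rw [h1, Matrix.mul_one, hD, Matrix.diagonal_mul_diagonal, Matrix.trace_diagonal]
  simp [sq]

lemma trace_Rmat (J : Set ℝ) (N : ℕ) : (Rmat J N).trace = (N : ℂ) * rho J 0 := by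
  simp only [Matrix.trace, Matrix.diag, Rmat, Matrix.of_apply, sub_self]
  simp [Finset.sum_const]

lemma trace_Rmat_sq (J : Set ℝ) (N : ℕ) :
    (Rmat J N * Rmat J N).trace
      = ∑ j : Fin N, ∑ k : Fin N, ((‖rho J ((j : ℤ) - (k : ℤ))‖ ^ 2 : ℝ) : ℂ) := by
  simp only [Matrix.trace, Matrix.diag, Matrix.mul_apply]
  refine Finset.sum_congr rfl fun j _ => Finset.sum_congr rfl fun k _ => ?_
  have h1 : Rmat J N k j = starRingEnd ℂ (Rmat J N j k) := by
    simp only [Rmat, Matrix.of_apply]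
    rw [show (k : ℤ) - (j : ℤ) = -((j : ℤ) - (k : ℤ)) by ring, rho_neg]
  rw [h1, Complex.mul_conj]
  simp [Complex.normSq_eq_norm_sq, Rmat]

lemma key_tendsto (a : ℤ → ℝ) (ha : ∀ t, 0 ≤ a t) (r : ℝ) (hsum : HasSum a r) :
    Tendsto (fun N : ℕ =>
      ((N : ℝ) * r - ∑ j : Fin N, ∑ k : Fin N, a ((j : ℤ) - (k : ℤ))) / N)
      atTop (𝓝 0) := by
  set Tail : ℕ → ℝ := fun m => r - ∑ t ∈ Finset.Icc (-(m : ℤ)) (m : ℤ), a t with hTail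
  have hTail_nonneg : ∀ m, 0 ≤ Tail m := fun m =>
    sub_nonneg.2 (sum_le_hasSum _ (fun t _ => ha t) hsum)
  have hTail_to : Tendsto Tail atTop (𝓝 0) := by
    have hmono : Monotone (fun m : ℕ => Finset.Icc (-(m : ℤ)) (m : ℤ)) := by
      intro m m' h
      apply Finset.Icc_subset_Icc <;> [skip; skip] <;> omega
    have hexh : ∀ t : ℤ, ∃ m : ℕ, t ∈ Finset.Icc (-(m : ℤ)) (m : ℤ) := by
      intro t
      exact ⟨t.natAbs, by simp only [Finset.mem_Icc]; omega⟩
    have h1 : Tendsto (fun m : ℕ => ∑ t ∈ Finset.Icc (-(m : ℤ)) (m : ℤ), a t)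
        atTop (𝓝 r) := hsum.comp (tendsto_atTop_finset_of_monotone hmono hexh)
    have := tendsto_const_nhds (x := r) (f := atTop (α := ℕ)) |>.sub h1
    simpa [hTail] using this
  -- per-j estimates
  have himage : ∀ (N : ℕ) (j : Fin N),
      ∑ k : Fin N, a ((j : ℤ) - (k : ℤ))
        = ∑ t ∈ Finset.image (fun k : Fin N => (j : ℤ) - (k : ℤ)) Finset.univ, a t := by
    intro N j
    rw [Finset.sum_image]
    intro x _ y _ hxy
    have : (x : ℤ) = (y : ℤ) := by simp only at hxy; omega
    exact Fin.ext (by exact_mod_cast this)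
  have hsum_le : ∀ (N : ℕ) (j : Fin N), ∑ k : Fin N, a ((j : ℤ) - (k : ℤ)) ≤ r := by
    intro N j
    rw [himage N j]
    exact sum_le_hasSum _ (fun t _ => ha t) hsum
  have hj : ∀ (N : ℕ) (j : Fin N),
      r - ∑ k : Fin N, a ((j : ℤ) - (k : ℤ))
        ≤ Tail (j : ℕ) + Tail (N - 1 - (j : ℕ)) := by
    intro N j
    set m := min (j : ℕ) (N - 1 - (j : ℕ)) with hm
    have hjN : (j : ℕ) < N := j.isLt
    have hsub : Finset.Icc (-(m : ℤ)) (m : ℤ)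
        ⊆ Finset.image (fun k : Fin N => (j : ℤ) - (k : ℤ)) Finset.univ := by
      intro t ht
      simp only [Finset.mem_Icc] at ht
      have ht1 := ht.1
      have ht2 := ht.2
      refine Finset.mem_image.2 ⟨⟨((j : ℤ) - t).toNat, by omega⟩, Finset.mem_univ _, ?_⟩
      simp only []
      omega
    have h2 : ∑ t ∈ Finset.Icc (-(m : ℤ)) (m : ℤ), a t
        ≤ ∑ k : Fin N, a ((j : ℤ) - (k : ℤ)) := by
      rw [himage N j]
      exact Finset.sum_le_sum_of_subset_of_nonneg hsub fun t _ _ => ha t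
    have h4 : Tail m ≤ Tail (j : ℕ) + Tail (N - 1 - (j : ℕ)) := by
      rcases le_total ((j : ℕ)) (N - 1 - (j : ℕ)) with hc | hc
      · rw [hm, min_eq_left hc]
        linarith [hTail_nonneg (N - 1 - (j : ℕ))]
      · rw [hm, min_eq_right hc]
        linarith [hTail_nonneg (j : ℕ)]
    have h3 : r - ∑ k : Fin N, a ((j : ℤ) - (k : ℤ)) ≤ Tail m := by
      simp only [hTail]
      linarith [h2]
    linarith
  have hbound : ∀ N : ℕ, (N : ℝ) * r - ∑ j : Fin N, ∑ k : Fin N, a ((j : ℤ) - (k : ℤ))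
      ≤ 2 * ∑ m ∈ Finset.range N, Tail m := by
    intro N
    have h1 : (N : ℝ) * r - ∑ j : Fin N, ∑ k : Fin N, a ((j : ℤ) - (k : ℤ))
        = ∑ j : Fin N, (r - ∑ k : Fin N, a ((j : ℤ) - (k : ℤ))) := by
      rw [Finset.sum_sub_distrib, Finset.sum_const, Finset.card_univ, Fintype.card_fin,
        nsmul_eq_mul]
    rw [h1]
    calc ∑ j : Fin N, (r - ∑ k : Fin N, a ((j : ℤ) - (k : ℤ)))
        ≤ ∑ j : Fin N, (Tail (j : ℕ) + Tail (N - 1 - (j : ℕ))) :=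
          Finset.sum_le_sum fun j _ => hj N j
      _ = ∑ j ∈ Finset.range N, Tail j + ∑ j ∈ Finset.range N, Tail (N - 1 - j) := by
          rw [Fin.sum_univ_eq_sum_range (fun j => Tail j + Tail (N - 1 - j)) N,
            Finset.sum_add_distrib]
      _ = 2 * ∑ m ∈ Finset.range N, Tail m := by
          rw [Finset.sum_range_reflect]
          ring
  have hnonneg : ∀ N : ℕ,
      0 ≤ (N : ℝ) * r - ∑ j : Fin N, ∑ k : Fin N, a ((j : ℤ) - (k : ℤ)) := by
    intro N
    have : ∑ j : Fin N, ∑ k : Fin N, a ((j : ℤ) - (k : ℤ)) ≤ ∑ _j : Fin N, r :=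
      Finset.sum_le_sum fun j _ => hsum_le N j
    simp only [Finset.sum_const, Finset.card_univ, Fintype.card_fin, nsmul_eq_mul] at this
    linarith
  have hces : Tendsto (fun N : ℕ => (N : ℝ)⁻¹ • ∑ m ∈ Finset.range N, Tail m)
      atTop (𝓝 0) := by
    have := hTail_to.cesaro
    simpa using this
  apply squeeze_zero (fun N => div_nonneg (hnonneg N) (Nat.cast_nonneg N))
    (g := fun N : ℕ => 2 * ((N : ℝ)⁻¹ • ∑ m ∈ Finset.range N, Tail m))
  · intro N
    rw [div_eq_inv_mul, smul_eq_mul, ← mul_assoc, mul_comm (2:ℝ) ((N:ℝ)⁻¹), mul_assoc]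
    exact mul_le_mul_of_nonneg_left (hbound N) (by positivity)
  · have := hces.const_mul (2 : ℝ)
    simpa using this

lemma ncard_eq_filter_card {N : ℕ} (p : Fin N → Prop) [DecidablePred p] :
    {j : Fin N | p j}.ncard = (Finset.univ.filter p).card := by
  rw [← Set.ncard_coe_finset]
  congr 1
  ext j
  simp

/-- For every `0 < ε < 1/2`, the proportion of eigenvalues of `R_N` in
`[ε, 1-ε]` tends to zero; asymptotically a fraction `m(J)/(2π)` of the eigenvalues are
within `ε` of `1` and a fraction `1 - m(J)/(2π)` are within `ε` of `0`. -/
theorem stmt12 (J : Set ℝ) (hJmeas : MeasurableSet J)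
    (hJsub : J ⊆ Set.Icc (-Real.pi) Real.pi)
    (hH : ∀ N : ℕ, (Rmat J N).IsHermitian)
    (hlam : ∀ (N : ℕ) (j : Fin N), (hH N).eigenvalues j ∈ Set.Icc (0 : ℝ) 1)
    (ε : ℝ) (hε0 : 0 < ε) (hε1 : ε < 1 / 2) :
    Tendsto
      (fun N : ℕ =>
        ({j : Fin N | (hH N).eigenvalues j ∈ Set.Icc ε (1 - ε)}.ncard : ℝ) / N)
      atTop (𝓝 0) ∧
    Tendsto
      (fun N : ℕ => ({j : Fin N | 1 - ε < (hH N).eigenvalues j}.ncard : ℝ) / N)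
      atTop (𝓝 ((volume J).toReal / (2 * Real.pi))) ∧
    Tendsto
      (fun N : ℕ => ({j : Fin N | (hH N).eigenvalues j < ε}.ncard : ℝ) / N)
      atTop (𝓝 (1 - (volume J).toReal / (2 * Real.pi))) := by
  classical
  have hπ := Real.pi_pos
  set r : ℝ := (volume J).toReal / (2 * Real.pi) with hr
  set lam : (N : ℕ) → Fin N → ℝ := fun N => (hH N).eigenvalues with hlamdef
  set a : ℤ → ℝ := fun t => ‖rho J t‖ ^ 2 with ha
  have hsum : HasSum a r := rho_hasSum J hJmeas hJsub
  -- sums of eigenvalues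
  have hS : ∀ N : ℕ, ∑ j, lam N j = N * r := by
    intro N
    have h1 : (∑ j, ((lam N j : ℝ) : ℂ)) = (N : ℂ) * ((r : ℝ) : ℂ) := by
      rw [← trace_eq_sum_eigen _ (hH N), trace_Rmat, rho_zero]
    exact_mod_cast h1
  have hQ : ∀ N : ℕ, ∑ j, (lam N j) ^ 2 = ∑ j : Fin N, ∑ k : Fin N, a ((j : ℤ) - (k : ℤ)) := by
    intro N
    have h1 : (∑ j, ((lam N j : ℝ) : ℂ)) ^ 0 = 1 := pow_zero _
    have h2 : (∑ j, (((lam N j) ^ 2 : ℝ) : ℂ))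
        = ∑ j : Fin N, ∑ k : Fin N, ((a ((j : ℤ) - (k : ℤ)) : ℝ) : ℂ) := by
      push_cast
      rw [← trace_sq_eq_sum_eigen_sq _ (hH N), trace_Rmat_sq]
    exact_mod_cast h2
  -- the defect D N
  set D : ℕ → ℝ := fun N => ∑ j, (lam N j - (lam N j) ^ 2) with hD
  have hDeq : ∀ N, D N = (N : ℝ) * r - ∑ j : Fin N, ∑ k : Fin N, a ((j : ℤ) - (k : ℤ)) := by
    intro N
    rw [hD]
    simp only [Finset.sum_sub_distrib, hS N, hQ N]
  have hDlim : Tendsto (fun N => D N / N) atTop (𝓝 0) := by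
    have h := key_tendsto a (fun t => by positivity) r hsum
    refine h.congr fun N => ?_
    rw [hDeq N]
  have hterm0 : ∀ (N : ℕ) (j : Fin N), 0 ≤ lam N j - (lam N j) ^ 2 := by
    intro N j
    have h := hlam N j
    simp only [Set.mem_Icc] at h
    nlinarith [h.1, h.2]
  have hD0 : ∀ N, 0 ≤ D N := fun N => Finset.sum_nonneg fun j _ => hterm0 N j
  have h1ε : (0:ℝ) < 1 - ε := by linarith
  have hεε : (0:ℝ) < ε * (1 - ε) := by positivity
  set cM : ℕ → ℕ := fun N =>
    (Finset.univ.filter (fun j : Fin N => lam N j ∈ Set.Icc ε (1 - ε))).card with hcM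
  set cH : ℕ → ℕ := fun N =>
    (Finset.univ.filter (fun j : Fin N => 1 - ε < lam N j)).card with hcH
  set cL : ℕ → ℕ := fun N =>
    (Finset.univ.filter (fun j : Fin N => lam N j < ε)).card with hcL
  -- middle eigenvalues bound
  have hMbound : ∀ N, (cM N : ℝ) * (ε * (1 - ε)) ≤ D N := by
    intro N
    calc (cM N : ℝ) * (ε * (1 - ε))
        = ∑ _j ∈ Finset.univ.filter (fun j : Fin N => lam N j ∈ Set.Icc ε (1 - ε)),
            ε * (1 - ε) := by rw [Finset.sum_const, nsmul_eq_mul]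
      _ ≤ ∑ j ∈ Finset.univ.filter (fun j : Fin N => lam N j ∈ Set.Icc ε (1 - ε)),
            (lam N j - lam N j ^ 2) := by
          refine Finset.sum_le_sum fun j hj => ?_
          simp only [Finset.mem_filter, Set.mem_Icc] at hj
          nlinarith [hj.2.1, hj.2.2]
      _ ≤ D N := Finset.sum_le_sum_of_subset_of_nonneg (Finset.filter_subset _ _)
            fun j _ _ => hterm0 N j
  have hMlim : Tendsto (fun N => (cM N : ℝ) / N) atTop (𝓝 0) := by
    apply squeeze_zero (fun N => by positivity)
      (g := fun N => (D N / N) / (ε * (1 - ε)))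
    · intro N
      have h2 : (cM N : ℝ) ≤ D N / (ε * (1 - ε)) := (le_div_iff₀ hεε).2 (hMbound N)
      rcases Nat.eq_zero_or_pos N with hN | hN
      · subst hN; simp
      · have hNpos : (0:ℝ) < N := by exact_mod_cast hN
        rw [div_div, div_le_div_iff₀ hNpos (by positivity)]
        calc (cM N : ℝ) * ((N:ℝ) * (ε * (1 - ε))) = ((cM N : ℝ) * (ε * (1-ε))) * N := by ring
          _ ≤ D N * N := by
              exact mul_le_mul_of_nonneg_right (hMbound N) hNpos.le
    · have := hDlim.div_const (ε * (1 - ε))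
      simpa using this
  -- splitting sums over the three classes
  have hε2 : ε ≤ 1 - ε := by linarith
  have hfilter1 : ∀ N : ℕ, Finset.univ.filter (fun j : Fin N => ¬ lam N j < ε)
      = Finset.univ.filter (fun j : Fin N => ε ≤ lam N j) := by
    intro N
    exact Finset.filter_congr fun j _ => by rw [not_lt]
  have hfilter2 : ∀ N : ℕ, (Finset.univ.filter (fun j : Fin N => ε ≤ lam N j)).filter
        (fun j => lam N j ≤ 1 - ε)
      = Finset.univ.filter (fun j : Fin N => lam N j ∈ Set.Icc ε (1 - ε)) := by
    intro N
    rw [Finset.filter_filter]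
    exact Finset.filter_congr fun j _ => by rw [Set.mem_Icc]
  have hfilter3 : ∀ N : ℕ, (Finset.univ.filter (fun j : Fin N => ε ≤ lam N j)).filter
        (fun j => ¬ lam N j ≤ 1 - ε)
      = Finset.univ.filter (fun j : Fin N => 1 - ε < lam N j) := by
    intro N
    rw [Finset.filter_filter]
    refine Finset.filter_congr fun j _ => ?_
    rw [not_le]
    constructor
    · exact fun h => h.2
    · exact fun h => ⟨le_trans hε2 h.le, h⟩
  have hsplit : ∀ (N : ℕ) (f : Fin N → ℝ), ∑ j, f j
      = ∑ j ∈ Finset.univ.filter (fun j : Fin N => lam N j < ε), f j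
        + ∑ j ∈ Finset.univ.filter (fun j : Fin N => lam N j ∈ Set.Icc ε (1 - ε)), f j
        + ∑ j ∈ Finset.univ.filter (fun j : Fin N => 1 - ε < lam N j), f j := by
    intro N f
    rw [← Finset.sum_filter_add_sum_filter_not Finset.univ (fun j => lam N j < ε) f,
      hfilter1 N,
      ← Finset.sum_filter_add_sum_filter_not
        (Finset.univ.filter (fun j : Fin N => ε ≤ lam N j)) (fun j => lam N j ≤ 1 - ε) f,
      hfilter2 N, hfilter3 N]
    ring
  -- high eigenvalue count
  set C : ℝ := 2 / (1 - ε) + 1 / (ε * (1 - ε)) with hC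
  have hkey : ∀ N, |(cH N : ℝ) - N * r| ≤ C * D N := by
    intro N
    set FH := Finset.univ.filter (fun j : Fin N => 1 - ε < lam N j) with hFH
    set FM := Finset.univ.filter (fun j : Fin N => lam N j ∈ Set.Icc ε (1 - ε)) with hFM
    set FL := Finset.univ.filter (fun j : Fin N => lam N j < ε) with hFL
    have hsums := hsplit N (lam N)
    have hDge : ∀ (F : Finset (Fin N)), ∑ j ∈ F, (lam N j - lam N j ^ 2) ≤ D N :=
      fun F => Finset.sum_le_sum_of_subset_of_nonneg (Finset.subset_univ F)
        fun j _ _ => hterm0 N j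
    -- Σ_FH (1 - λ) ≤ D N / (1-ε)
    have hH1 : (1 - ε) * ((cH N : ℝ) - ∑ j ∈ FH, lam N j) ≤ D N := by
      have : ∀ j ∈ FH, (1 - ε) * (1 - lam N j) ≤ lam N j - lam N j ^ 2 := by
        intro j hj
        simp only [hFH, Finset.mem_filter] at hj
        have hb := hlam N j
        simp only [Set.mem_Icc] at hb
        nlinarith [hj.2, hb.2]
      calc (1 - ε) * ((cH N : ℝ) - ∑ j ∈ FH, lam N j)
          = ∑ j ∈ FH, (1 - ε) * (1 - lam N j) := by
            rw [← Finset.mul_sum, Finset.sum_sub_distrib, Finset.sum_const, nsmul_eq_mul,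
              mul_one, hcH]
        _ ≤ ∑ j ∈ FH, (lam N j - lam N j ^ 2) := Finset.sum_le_sum this
        _ ≤ D N := hDge FH
    have hH2 : 0 ≤ (cH N : ℝ) - ∑ j ∈ FH, lam N j := by
      have : ∑ j ∈ FH, lam N j ≤ ∑ _j ∈ FH, (1:ℝ) :=
        Finset.sum_le_sum fun j _ => (hlam N j).2
      simp only [Finset.sum_const, nsmul_eq_mul, mul_one] at this
      rw [hcH]
      linarith
    -- Σ_FM λ ∈ [0, D N/(ε(1-ε))]
    have hM1 : ∑ j ∈ FM, lam N j ≤ D N / (ε * (1 - ε)) := by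
      have h1 : ∑ j ∈ FM, lam N j ≤ ∑ _j ∈ FM, (1:ℝ) :=
        Finset.sum_le_sum fun j _ => (hlam N j).2
      simp only [Finset.sum_const, nsmul_eq_mul, mul_one] at h1
      have h2 : (cM N : ℝ) ≤ D N / (ε * (1 - ε)) := (le_div_iff₀ hεε).2 (hMbound N)
      rw [hFM]
      exact le_trans h1 h2
    have hM2 : 0 ≤ ∑ j ∈ FM, lam N j :=
      Finset.sum_nonneg fun j _ => (hlam N j).1
    -- Σ_FL λ ∈ [0, D N/(1-ε)]
    have hL1 : (1 - ε) * ∑ j ∈ FL, lam N j ≤ D N := by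
      have : ∀ j ∈ FL, (1 - ε) * lam N j ≤ lam N j - lam N j ^ 2 := by
        intro j hj
        simp only [hFL, Finset.mem_filter] at hj
        have hb := hlam N j
        simp only [Set.mem_Icc] at hb
        nlinarith [hj.2, hb.1]
      calc (1 - ε) * ∑ j ∈ FL, lam N j = ∑ j ∈ FL, (1 - ε) * lam N j := Finset.mul_sum ..
        _ ≤ ∑ j ∈ FL, (lam N j - lam N j ^ 2) := Finset.sum_le_sum this
        _ ≤ D N := hDge FL
    have hL2 : 0 ≤ ∑ j ∈ FL, lam N j :=
      Finset.sum_nonneg fun j _ => (hlam N j).1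
    have hH1' : (cH N : ℝ) - ∑ j ∈ FH, lam N j ≤ D N / (1 - ε) :=
      (le_div_iff₀ h1ε).2 (by linarith [hH1])
    have hL1' : ∑ j ∈ FL, lam N j ≤ D N / (1 - ε) :=
      (le_div_iff₀ h1ε).2 (by linarith [hL1])
    have hNr : (N : ℝ) * r = ∑ j ∈ FL, lam N j + ∑ j ∈ FM, lam N j + ∑ j ∈ FH, lam N j := by
      rw [← hsums, hS N]
    rw [abs_le, hC]
    have e1 : (2 / (1 - ε) + 1 / (ε * (1 - ε))) * D N
        = 2 * (D N / (1 - ε)) + D N / (ε * (1 - ε)) := by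
      field_simp
    constructor
    · rw [e1]
      have := div_nonneg (hD0 N) h1ε.le
      linarith [hH2, hM1, hL1', hNr]
    · rw [e1]
      have := div_nonneg (hD0 N) h1ε.le
      linarith [hH1', hM2, hL2, hNr]
  have hHlim : Tendsto (fun N => (cH N : ℝ) / N) atTop (𝓝 r) := by
    have hdiff : Tendsto (fun N => (cH N : ℝ) / N - r) atTop (𝓝 0) := by
      apply squeeze_zero_norm' (a := fun N => C * (D N / N))
      · filter_upwards [eventually_ge_atTop 1] with N hN
        have hNpos : (0:ℝ) < N := by exact_mod_cast hN
        have heq : (cH N : ℝ) / N - r = ((cH N : ℝ) - N * r) / N := by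
          field_simp
        rw [heq, Real.norm_eq_abs, abs_div, abs_of_pos hNpos, div_le_iff₀ hNpos]
        calc |(cH N : ℝ) - N * r| ≤ C * D N := hkey N
          _ = C * (D N / N) * N := by field_simp
      · have := hDlim.const_mul C
        simpa using this
    have := hdiff.add (tendsto_const_nhds (x := r))
    simp only [sub_add_cancel, zero_add] at this
    exact this
  -- low eigenvalue count via partition
  have hcard : ∀ N, cL N + cM N + cH N = N := by
    intro N
    have h1 := Finset.card_filter_add_card_filter_not
      (s := (Finset.univ : Finset (Fin N))) (p := fun j => lam N j < ε)
    rw [hfilter1 N, Finset.card_univ, Fintype.card_fin] at h1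
    have h2 := Finset.card_filter_add_card_filter_not
      (s := Finset.univ.filter (fun j : Fin N => ε ≤ lam N j))
      (p := fun j => lam N j ≤ 1 - ε)
    rw [hfilter2 N, hfilter3 N] at h2
    rw [hcL, hcM, hcH]
    simp only []
    omega
  have hLlim : Tendsto (fun N => (cL N : ℝ) / N) atTop (𝓝 (1 - r)) := by
    have heq : ∀ᶠ N in atTop, 1 - (cM N : ℝ)/N - (cH N : ℝ)/N = (cL N : ℝ) / N := by
      filter_upwards [eventually_ge_atTop 1] with N hN
      have hNpos : (0:ℝ) < N := by exact_mod_cast hN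
      have h := congrArg (fun n : ℕ => (n : ℝ)) (hcard N)
      push_cast at h
      field_simp
      linarith
    have hrhs : Tendsto (fun N => 1 - (cM N : ℝ)/N - (cH N : ℝ)/N) atTop (𝓝 (1 - 0 - r)) :=
      (tendsto_const_nhds.sub hMlim).sub hHlim
    refine Tendsto.congr' heq ?_
    convert hrhs using 2
    ring
  refine ⟨?_, ?_, ?_⟩
  · refine hMlim.congr fun N => ?_
    rw [ncard_eq_filter_card, hcM]
  · refine hHlim.congr fun N => ?_
    rw [ncard_eq_filter_card, hcH]
  · refine hLlim.congr fun N => ?_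
    rw [ncard_eq_filter_card, hcL]
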